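/- For a Fock-space construction F with natural transformations η and ε, the creation operator a⁺ = ∇̄_A ∘ (η_A ⊗ id_{FA}) satisfies ε̄_A ∘ a⁺ = 0 : A ⊗ FA → I, and the annihilation operator a⁻ = (ε_A ⊗ id_{FA}) ∘ Δ̄_A satisfies a⁻ ∘ η̄_A = 0 : I → A ⊗ FA. -/

import Mathlib

open CategoryTheory CategoryTheory.Limits CategoryTheory.MonoidalCategory ZeroObject

universe v u

variable (C : Type u) [Category.{v} C] [HasZeroObject C] [HasZeroMorphisms C]
  [HasBinaryBiproducts C] [MonoidalCategory C] [SymmetricCategory C]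

/-- The diagonal `Δ_A = ⟨id, id⟩ : A ⟶ A ⊞ A`. -/
noncomputable abbrev bdiag (A : C) : A ⟶ A ⊞ A := biprod.lift (𝟙 A) (𝟙 A)

/-- The codiagonal `∇_A = [id, id] : A ⊞ A ⟶ A`. -/
noncomputable abbrev bcodiag (A : C) : A ⊞ A ⟶ A := biprod.desc (𝟙 A) (𝟙 A)

variable {C}

/-- Convolution addition of morphisms induced by the biproduct structure:
`f + g = ∇_B ∘ (f ⊞ g) ∘ Δ_A`. -/
noncomputable def cadd {A B : C} (f g : A ⟶ B) : A ⟶ B :=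
  bdiag C A ≫ biprod.map f g ≫ bcodiag C B

variable (C)

/-- Compatibility of the biproduct structure and the symmetric monoidal
structure: the tensor product is bilinear for the biproduct (convolution)
enrichment.  A category carrying both compatible structures is a category of
spaces and linear maps. -/
class TensorCompatible : Prop where
  zero_tensorHom : ∀ {A B X Y : C} (f : X ⟶ Y), (0 : A ⟶ B) ⊗ₘ f = 0
  tensorHom_zero : ∀ {A B X Y : C} (f : X ⟶ Y), f ⊗ₘ (0 : A ⟶ B) = 0
  cadd_tensorHom : ∀ {A B X Y : C} (f g : A ⟶ B) (h : X ⟶ Y),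
    cadd f g ⊗ₘ h = cadd (f ⊗ₘ h) (g ⊗ₘ h)
  tensorHom_cadd : ∀ {A B X Y : C} (f g : A ⟶ B) (h : X ⟶ Y),
    h ⊗ₘ cadd f g = cadd (h ⊗ₘ f) (h ⊗ₘ g)

/-- A (bosonic) Fock-space construction on a category of spaces and linear
maps: a strong symmetric monoidal functor from the biproduct monoidal
structure `(0, ⊞)` to the symmetric monoidal structure `(𝟙_ C, ⊗)`. -/
structure FockConstruction where
  /-- The underlying functor. -/
  F : C ⥤ C
  /-- The unit comparison isomorphism `I ≅ F 0`. -/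
  φ₀ : 𝟙_ C ≅ F.obj (0 : C)
  /-- The tensor comparison isomorphism `F A ⊗ F B ≅ F (A ⊞ B)`. -/
  φ : ∀ A B : C, F.obj A ⊗ F.obj B ≅ F.obj (A ⊞ B)
  φ_natural : ∀ {A B A' B' : C} (f : A ⟶ A') (g : B ⟶ B'),
    (F.map f ⊗ₘ F.map g) ≫ (φ A' B').hom = (φ A B).hom ≫ F.map (biprod.map f g)
  left_unitality : ∀ A : C,
    (φ₀.hom ⊗ₘ 𝟙 (F.obj A)) ≫ (φ 0 A).hom ≫ F.map (biprod.desc 0 (𝟙 A)) =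
      (λ_ (F.obj A)).hom
  right_unitality : ∀ A : C,
    (𝟙 (F.obj A) ⊗ₘ φ₀.hom) ≫ (φ A 0).hom ≫ F.map (biprod.desc (𝟙 A) 0) =
      (ρ_ (F.obj A)).hom
  associativity : ∀ A B D : C,
    ((φ A B).hom ⊗ₘ 𝟙 (F.obj D)) ≫ (φ (A ⊞ B) D).hom ≫
        F.map (biprod.associator A B D).hom =
      (α_ (F.obj A) (F.obj B) (F.obj D)).hom ≫
        (𝟙 (F.obj A) ⊗ₘ (φ B D).hom) ≫ (φ A (B ⊞ D)).hom
  braided : ∀ A B : C,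
    (φ A B).hom ≫ F.map (biprod.braiding A B).hom =
      (β_ (F.obj A) (F.obj B)).hom ≫ (φ B A).hom

namespace FockConstruction

variable {C} (Φ : FockConstruction C)

/-- The unit `η̄_A : I ⟶ F A` of the Fock bialgebra. -/
noncomputable def unit (A : C) : 𝟙_ C ⟶ Φ.F.obj A :=
  Φ.φ₀.hom ≫ Φ.F.map (0 : (0 : C) ⟶ A)

/-- The multiplication `∇̄_A : F A ⊗ F A ⟶ F A` of the Fock bialgebra. -/
noncomputable def mult (A : C) : Φ.F.obj A ⊗ Φ.F.obj A ⟶ Φ.F.obj A :=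
  (Φ.φ A A).hom ≫ Φ.F.map (bcodiag C A)

/-- The counit `ε̄_A : F A ⟶ I` of the Fock bialgebra. -/
noncomputable def counit (A : C) : Φ.F.obj A ⟶ 𝟙_ C :=
  Φ.F.map (0 : A ⟶ (0 : C)) ≫ Φ.φ₀.inv

/-- The comultiplication `Δ̄_A : F A ⟶ F A ⊗ F A` of the Fock bialgebra. -/
noncomputable def comult (A : C) : Φ.F.obj A ⟶ Φ.F.obj A ⊗ Φ.F.obj A :=
  Φ.F.map (bdiag C A) ≫ (Φ.φ A A).inv

/-- The creation operator `a⁺ = ∇̄_A ∘ (η_A ⊗ id) : A ⊗ F A ⟶ F A` associated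
to a natural transformation `η : Id ⟶ F`. -/
noncomputable def creation (η : 𝟭 C ⟶ Φ.F) (A : C) : A ⊗ Φ.F.obj A ⟶ Φ.F.obj A :=
  (η.app A ⊗ₘ 𝟙 (Φ.F.obj A)) ≫ Φ.mult A

/-- The annihilation operator `a⁻ = (ε_A ⊗ id) ∘ Δ̄_A : F A ⟶ A ⊗ F A`
associated to a natural transformation `ε : F ⟶ Id`. -/
noncomputable def annihilation (ε : Φ.F ⟶ 𝟭 C) (A : C) :
    Φ.F.obj A ⟶ A ⊗ Φ.F.obj A :=
  Φ.comult A ≫ (ε.app A ⊗ₘ 𝟙 (Φ.F.obj A))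

end FockConstruction

/-- For a Fock-space construction, the creation operator is annihilated by the
counit, `ε̄_A ∘ a⁺ = 0`, and the annihilation operator kills the unit,
`a⁻ ∘ η̄_A = 0`. -/
theorem FockConstruction.counit_creation_and_annihilation_unit {C : Type u}
    [Category.{v} C] [HasZeroObject C] [HasZeroMorphisms C]
    [HasBinaryBiproducts C] [MonoidalCategory C] [SymmetricCategory C]
    [TensorCompatible C] (Φ : FockConstruction C) (η : 𝟭 C ⟶ Φ.F)
    (ε : Φ.F ⟶ 𝟭 C) (A : C) :
    Φ.creation η A ≫ Φ.counit A = 0 ∧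
    Φ.unit A ≫ Φ.annihilation ε A = 0 := by
  constructor
  · have h1 : bcodiag C A ≫ (0 : A ⟶ (0 : C)) =
        biprod.map (0 : A ⟶ (0 : C)) (0 : A ⟶ (0 : C)) ≫
          (0 : (0 : C) ⊞ (0 : C) ⟶ (0 : C)) :=
      (isZero_zero C).eq_of_tgt _ _
    have h2 : η.app A ≫ Φ.F.map (0 : A ⟶ (0 : C)) = 0 := by
      have := η.naturality (0 : A ⟶ (0 : C))
      simp only [Functor.id_map] at this
      rw [← this, zero_comp]
    calc Φ.creation η A ≫ Φ.counit A
        = (η.app A ⊗ₘ 𝟙 (Φ.F.obj A)) ≫ (Φ.φ A A).hom ≫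
            (Φ.F.map (bcodiag C A) ≫ Φ.F.map (0 : A ⟶ (0 : C))) ≫ Φ.φ₀.inv := by
          simp [creation, counit, mult]
      _ = (η.app A ⊗ₘ 𝟙 (Φ.F.obj A)) ≫ ((Φ.φ A A).hom ≫
            Φ.F.map (biprod.map (0 : A ⟶ (0 : C)) (0 : A ⟶ (0 : C)))) ≫
            Φ.F.map (0 : (0 : C) ⊞ (0 : C) ⟶ (0 : C)) ≫ Φ.φ₀.inv := by
          rw [← Φ.F.map_comp, h1, Φ.F.map_comp]; simp
      _ = ((η.app A ≫ Φ.F.map (0 : A ⟶ (0 : C))) ⊗ₘ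
            (𝟙 (Φ.F.obj A) ≫ Φ.F.map (0 : A ⟶ (0 : C)))) ≫ (Φ.φ 0 0).hom ≫
            Φ.F.map (0 : (0 : C) ⊞ (0 : C) ⟶ (0 : C)) ≫ Φ.φ₀.inv := by
          rw [← Φ.φ_natural, ← tensorHom_comp_tensorHom]; simp
      _ = 0 := by
          rw [h2, Category.id_comp, TensorCompatible.zero_tensorHom, zero_comp]
  · have h1 : (0 : (0 : C) ⟶ A) ≫ bdiag C A =
        (0 : (0 : C) ⟶ (0 : C) ⊞ (0 : C)) ≫
          biprod.map (0 : (0 : C) ⟶ A) (0 : (0 : C) ⟶ A) :=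
      (isZero_zero C).eq_of_src _ _
    have h2 : Φ.F.map (0 : (0 : C) ⟶ A) ≫ ε.app A = 0 := by
      have := ε.naturality (0 : (0 : C) ⟶ A)
      simp only [Functor.id_map] at this
      rw [this, comp_zero]
    have hnat : Φ.F.map (biprod.map (0 : (0 : C) ⟶ A) (0 : (0 : C) ⟶ A)) ≫
        (Φ.φ A A).inv = (Φ.φ 0 0).inv ≫
          (Φ.F.map (0 : (0 : C) ⟶ A) ⊗ₘ Φ.F.map (0 : (0 : C) ⟶ A)) := by
      rw [Iso.comp_inv_eq, Category.assoc, Φ.φ_natural, Iso.inv_hom_id_assoc]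
    calc Φ.unit A ≫ Φ.annihilation ε A
        = Φ.φ₀.hom ≫ Φ.F.map (0 : (0 : C) ⟶ (0 : C) ⊞ (0 : C)) ≫
            (Φ.F.map (biprod.map (0 : (0 : C) ⟶ A) (0 : (0 : C) ⟶ A)) ≫
              (Φ.φ A A).inv) ≫ (ε.app A ⊗ₘ 𝟙 (Φ.F.obj A)) := by
          simp only [unit, annihilation, comult, Category.assoc]
          rw [← Φ.F.map_comp_assoc, h1, Φ.F.map_comp_assoc]
      _ = Φ.φ₀.hom ≫ Φ.F.map (0 : (0 : C) ⟶ (0 : C) ⊞ (0 : C)) ≫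
            (Φ.φ 0 0).inv ≫ ((Φ.F.map (0 : (0 : C) ⟶ A) ≫ ε.app A) ⊗ₘ
              (Φ.F.map (0 : (0 : C) ⟶ A) ≫ 𝟙 (Φ.F.obj A))) := by
          rw [hnat, Category.assoc, tensorHom_comp_tensorHom]
      _ = 0 := by
          rw [h2, TensorCompatible.zero_tensorHom, comp_zero, comp_zero,
            comp_zero]
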